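/- Under D_ε, the predictor Ŷ=A has group-conditional rates γ_{y0}(Ŷ)=0 and γ_{y1}(Ŷ)=1 for both y∈{0,1}; hence any non-discriminatory (equalized odds) predictor derived only from (Ŷ,A)=(A,A) must be independent of Y, and therefore every such derived binary predictor has 0-1 loss at least 1/2. -/

import Mathlib

/-- The joint pmf of `(X, A, Y)` under `D_ε`. -/
noncomputable def pD (ε : ℝ) (x a y : Bool) : ℝ :=
  (1 / 2) * (if a = y then 1 - ε else ε) * (if x = y then 1 - 2 * ε else 2 * ε)

/-- Under `D_ε`, the predictor `Ŷ = A` has group-conditional rates `γ_{y0} = 0` and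
`γ_{y1} = 1`.  Moreover, any randomized binary predictor derived only from `(Ŷ, A) = (A, A)`
(given by `q a = P(Ỹ = 1 | A = a)`) which is non-discriminatory (equalized odds, i.e.
`q false = q true`) has 0-1 loss at least `1/2`. -/
theorem stmt2 (ε : ℝ) (hε0 : 0 < ε) (hε1 : ε < 1 / 4)
    (q : Bool → ℝ) (hq0 : ∀ a, 0 ≤ q a) (hq1 : ∀ a, q a ≤ 1)
    (hnd : q false = q true) :
    (∀ y a : Bool,
      (∑ x : Bool, pD ε x a y * (if a then 1 else 0)) / (∑ x : Bool, pD ε x a y)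
        = if a then 1 else 0) ∧
    (1 / 2 : ℝ) ≤ ∑ x : Bool, ∑ a : Bool, ∑ y : Bool,
      pD ε x a y * (if y then 1 - q a else q a) := by
  constructor
  · intro y a
    cases y <;> cases a <;> simp [pD, Fin.sum_univ_succ] 
    · intro hc; nlinarith
    · intro hc; nlinarith
  · have h := hnd
    have h0 := hq0 true
    have h1 := hq1 true
    simp [pD, Fin.sum_univ_succ] at *
    nlinarith
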